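/- Let s : I → ℝ be a non-identically-zero real analytic solution of 2·s·s'' − (s')² = s²·(3s + 2t)·(s + 2t) on I with s(a) = 0. Then s''(a) ≠ 0. -/

import Mathlib

open Filter Topology

lemma analyticAt_deriv' {g : ℝ → ℝ} {a : ℝ} (hg : AnalyticAt ℝ g a) :
    AnalyticAt ℝ (deriv g) a := by
  have h : AnalyticAt ℝ ((ContinuousLinearMap.apply ℝ ℝ (1:ℝ)) ∘ fderiv ℝ g) a :=
    ((ContinuousLinearMap.apply ℝ ℝ (1:ℝ)).analyticAt _).comp hg.fderiv
  have heq : deriv g = (ContinuousLinearMap.apply ℝ ℝ (1:ℝ)) ∘ fderiv ℝ g := by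
    funext x
    simp [Function.comp, ContinuousLinearMap.apply_apply, fderiv_apply_one_eq_deriv]
  rw [heq]; exact h

lemma deriv_fac {g : ℝ → ℝ} {a : ℝ} (hg : AnalyticAt ℝ g a) (m : ℕ) (hm : 1 ≤ m)
    {f : ℝ → ℝ} (hfs : f =ᶠ[𝓝 a] fun z => (z - a) ^ m * g z) :
    deriv f =ᶠ[𝓝 a] fun z => (z - a) ^ (m - 1) * ((m : ℝ) * g z + (z - a) * deriv g z) := by
  have h1 : deriv f =ᶠ[𝓝 a] deriv (fun z => (z - a) ^ m * g z) := hfs.deriv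
  have h2 : ∀ᶠ z in 𝓝 a, AnalyticAt ℝ g z := hg.eventually_analyticAt
  filter_upwards [h1, h2] with z hz hgz
  rw [hz]
  have hd1 : HasDerivAt (fun z : ℝ => (z - a) ^ m) ((m : ℝ) * (z - a) ^ (m - 1)) z := by
    simpa using ((hasDerivAt_id z).sub_const a).fun_pow m
  have := hd1.fun_mul hgz.differentiableAt.hasDerivAt
  rw [this.deriv]
  have : (z - a) ^ m = (z - a) ^ (m - 1) * (z - a) := by
    rw [← pow_succ, Nat.sub_add_cancel hm]
  rw [this]; ring

theorem stmt_16 (I : Set ℝ) (hI : IsOpen I) (hI' : IsPreconnected I) (s : ℝ → ℝ) (a : ℝ)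
    (ha : a ∈ I) (hs : AnalyticOnNhd ℝ s I)
    (heq : ∀ t ∈ I, 2 * s t * deriv (deriv s) t - (deriv s t) ^ 2
      = (s t) ^ 2 * (3 * s t + 2 * t) * (s t + 2 * t))
    (hnz : ¬ ∀ t ∈ I, s t = 0)
    (h0 : s a = 0) :
    deriv (deriv s) a ≠ 0 := by
  intro h2
  have hsa := heq a ha
  rw [h0] at hsa
  have h1 : deriv s a = 0 := by nlinarith [sq_nonneg (deriv s a)]
  have hA : AnalyticAt ℝ s a := hs a ha
  rcases eq_or_ne (analyticOrderAt s a) ⊤ with htop | hfin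
  · have hev : s =ᶠ[𝓝 a] 0 := analyticOrderAt_eq_top.mp htop
    have := hs.eqOn_zero_of_preconnected_of_eventuallyEq_zero hI' ha hev
    exact hnz fun t ht => this ht
  · obtain ⟨n, hn⟩ := Option.ne_none_iff_exists'.mp hfin
    obtain ⟨g, hg, hga, hfac⟩ := (hA.analyticOrderAt_eq_natCast (n := n)).mp hn
    simp only [smul_eq_mul] at hfac
    have hval : ∀ {u v : ℝ → ℝ}, u =ᶠ[𝓝 a] v → u a = v a := fun h => h.self_of_nhds
    have hn0 : n ≠ 0 := by
      intro h; subst h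
      have hv := hval hfac
      rw [h0] at hv
      simp at hv
      exact hga hv.symm
    set g1 : ℝ → ℝ := fun z => (n : ℝ) * g z + (z - a) * deriv g z with hg1def
    have hg1 : AnalyticAt ℝ g1 a :=
      (analyticAt_const.mul hg).add
        ((analyticAt_id.sub analyticAt_const).mul (analyticAt_deriv' hg))
    have hds : deriv s =ᶠ[𝓝 a] fun z => (z - a) ^ (n - 1) * g1 z :=
      deriv_fac hg n (Nat.one_le_iff_ne_zero.mpr hn0) hfac
    have hg1a : g1 a = (n : ℝ) * g a := by simp [hg1def]
    have hn1 : n ≠ 1 := by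
      intro h
      have hv := hval hds
      rw [h1] at hv
      subst h
      simp [hg1a] at hv
      exact hga hv.symm
    have hn2' : 2 ≤ n := by omega
    set g2 : ℝ → ℝ := fun z => ((n : ℝ) - 1) * g1 z + (z - a) * deriv g1 z with hg2def
    have hg2 : AnalyticAt ℝ g2 a :=
      (analyticAt_const.mul hg1).add
        ((analyticAt_id.sub analyticAt_const).mul (analyticAt_deriv' hg1))
    have hdds : deriv (deriv s) =ᶠ[𝓝 a] fun z => (z - a) ^ (n - 2) * g2 z := by
      have hstep := deriv_fac hg1 (n - 1) (by omega) hds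
      have hcast : ((n - 1 : ℕ) : ℝ) = (n : ℝ) - 1 := by
        push_cast [Nat.cast_sub (by omega : 1 ≤ n)]; ring
      simpa [hcast, show n - 1 - 1 = n - 2 from by omega, hg2def] using hstep
    have hg2a : g2 a = ((n : ℝ) - 1) * ((n : ℝ) * g a) := by simp [hg2def, hg1a]
    have hn2 : n ≠ 2 := by
      intro h
      have hv := hval hdds
      rw [h2] at hv
      subst h
      rw [hg2a] at hv
      norm_num at hv
      exact hga hv
    have hn3 : 3 ≤ n := by omega
    have key : ∀ᶠ z in 𝓝 a,
        (z - a) ^ (2 * n - 2) * (2 * g z * g2 z - g1 z ^ 2)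
          = (z - a) ^ (2 * n) * (g z ^ 2 * (3 * s z + 2 * z) * (s z + 2 * z)) := by
      have hIa : ∀ᶠ z in 𝓝 a, z ∈ I := hI.mem_nhds ha
      filter_upwards [hfac, hds, hdds, hIa] with z hsz hdz hddz hzI
      have hEq := heq z hzI
      rw [hdz, hddz] at hEq
      calc (z - a) ^ (2 * n - 2) * (2 * g z * g2 z - g1 z ^ 2)
          = 2 * ((z - a) ^ n * g z) * ((z - a) ^ (n - 2) * g2 z)
            - ((z - a) ^ (n - 1) * g1 z) ^ 2 := by
            rw [show 2 * n - 2 = n + (n - 2) from by omega, pow_add]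
            rw [show ((z - a) ^ (n - 1) * g1 z) ^ 2
                = (z - a) ^ ((n - 1) * 2) * g1 z ^ 2 from by rw [mul_pow, ← pow_mul]]
            rw [show (n - 1) * 2 = n + (n - 2) from by omega, pow_add]
            ring
        _ = 2 * s z * ((z - a) ^ (n - 2) * g2 z)
            - ((z - a) ^ (n - 1) * g1 z) ^ 2 := by rw [← hsz]
        _ = s z ^ 2 * (3 * s z + 2 * z) * (s z + 2 * z) := hEq
        _ = ((z - a) ^ n * g z) ^ 2 * (3 * s z + 2 * z) * (s z + 2 * z) := by rw [← hsz]
        _ = (z - a) ^ (2 * n) * (g z ^ 2 * (3 * s z + 2 * z) * (s z + 2 * z)) := by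
            rw [mul_pow, ← pow_mul, show n * 2 = 2 * n from by omega]; ring
    have key2 : ∀ᶠ z in 𝓝[≠] a,
        2 * g z * g2 z - g1 z ^ 2
          = (z - a) ^ 2 * (g z ^ 2 * (3 * s z + 2 * z) * (s z + 2 * z)) := by
      filter_upwards [key.filter_mono nhdsWithin_le_nhds, self_mem_nhdsWithin] with z hz hza
      have hne : (z - a) ^ (2 * n - 2) ≠ 0 := pow_ne_zero _ (sub_ne_zero.mpr hza)
      apply mul_left_cancel₀ hne
      calc (z - a) ^ (2 * n - 2) * (2 * g z * g2 z - g1 z ^ 2)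
          = (z - a) ^ (2 * n) * (g z ^ 2 * (3 * s z + 2 * z) * (s z + 2 * z)) := hz
        _ = (z - a) ^ (2 * n - 2)
            * ((z - a) ^ 2 * (g z ^ 2 * (3 * s z + 2 * z) * (s z + 2 * z))) := by
            conv_lhs => rw [show 2 * n = 2 * n - 2 + 2 from by omega]
            rw [pow_add]; ring
    have hcg : ContinuousAt g a := hg.continuousAt
    have hcg1 : ContinuousAt g1 a := hg1.continuousAt
    have hcg2 : ContinuousAt g2 a := hg2.continuousAt
    have hL : Tendsto (fun z => 2 * g z * g2 z - g1 z ^ 2) (𝓝[≠] a)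
        (𝓝 (2 * g a * g2 a - g1 a ^ 2)) :=
      Tendsto.mono_left (((hcg.const_mul 2).mul hcg2).sub (hcg1.pow 2)) nhdsWithin_le_nhds
    have hR : Tendsto (fun z => (z - a) ^ 2 * (g z ^ 2 * (3 * s z + 2 * z) * (s z + 2 * z)))
        (𝓝[≠] a) (𝓝 0) := by
      apply Tendsto.mono_left _ nhdsWithin_le_nhds
      have hc : ContinuousAt
          (fun z => (z - a) ^ 2 * (g z ^ 2 * (3 * s z + 2 * z) * (s z + 2 * z))) a := by
        have hcs : ContinuousAt s a := hA.continuousAt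
        fun_prop
      have h0' : (fun z : ℝ => (z - a) ^ 2
          * (g z ^ 2 * (3 * s z + 2 * z) * (s z + 2 * z))) a = 0 := by simp
      rw [← h0']
      exact hc.tendsto
    have hLR : Tendsto (fun z => 2 * g z * g2 z - g1 z ^ 2) (𝓝[≠] a) (𝓝 0) :=
      Tendsto.congr' (key2.mono fun _ hz => hz.symm) hR
    have hzero : 2 * g a * g2 a - g1 a ^ 2 = 0 := tendsto_nhds_unique hL hLR
    rw [hg1a, hg2a] at hzero
    have hx2 : 0 < g a ^ 2 := by positivity
    have hn' : (3 : ℝ) ≤ (n : ℝ) := by exact_mod_cast hn3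
    nlinarith [hzero, hx2, hn', sq_nonneg (g a)]
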